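/- Let L = ℤ² with a symmetric bilinear form b such that b(x,x) ∈ 2ℤ for all x, the form is indefinite of signature (1,1), and its Gram matrix has determinant −4. Then L is isometric either to U(2) (Gram matrix [[0,2],[2,0]]) or to ⟨2⟩ ⊕ ⟨−2⟩ (Gram matrix diag(2,−2)), and these two lattices are not isometric to each other. -/

import Mathlib

lemma exists_basis_pair (v w : Fin 2 → ℤ)
    (h : v 0 * w 1 - v 1 * w 0 = 1 ∨ v 0 * w 1 - v 1 * w 0 = -1) :
    ∃ B : Module.Basis (Fin 2) ℤ (Fin 2 → ℤ), B 0 = v ∧ B 1 = w := by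
  set M : Matrix (Fin 2) (Fin 2) ℤ := !![v 0, w 0; v 1, w 1] with hM
  have hdet : IsUnit M.det := by
    rw [hM, Matrix.det_fin_two_of, Int.isUnit_iff]
    rcases h with h | h
    · left; linarith [mul_comm (w 0) (v 1)]
    · right; linarith [mul_comm (w 0) (v 1)]
  have hinv := M.invertibleOfIsUnitDet hdet
  refine ⟨(Pi.basisFun ℤ (Fin 2)).map (M.toLinearEquiv' hinv), ?_, ?_⟩ <;>
  · funext i
    fin_cases i <;>
      simp [Matrix.toLinearEquiv', Matrix.mulVec_single, hM]

lemma arith_classify (a' d' c' : ℤ) (h : a' * c' - d' * d' = -1) :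
    ∃ p q r s : ℤ, (p * s - q * r = 1 ∨ p * s - q * r = -1) ∧
      a' * p * p + d' * p * q + d' * q * p + c' * q * q = 0 ∧
      a' * p * r + d' * p * s + d' * q * r + c' * q * s = 1 := by
  by_cases ha : a' = 0
  · subst ha
    have hd : d' = 1 ∨ d' = -1 := by
      have : (d' - 1) * (d' + 1) = 0 := by linear_combination -h
      rcases mul_eq_zero.mp this with h1 | h1
      · left; linarith
      · right; linarith
    rcases hd with hd | hd
    · exact ⟨1, 0, 0, 1, Or.inl (by ring), by ring, by rw [hd]; ring⟩
    · exact ⟨1, 0, 0, -1, Or.inr (by ring), by ring, by rw [hd]; ring⟩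
  · set p₀ : ℤ := d' - 1 with hp₀
    set q₀ : ℤ := -a' with hq₀
    have hG0 : a' * p₀ * p₀ + d' * p₀ * q₀ + d' * q₀ * p₀ + c' * q₀ * q₀ = 0 := by
      rw [hp₀, hq₀]; linear_combination a' * h
    set g : ℕ := Int.gcd p₀ q₀ with hg
    have hgpos : 0 < g := by
      rw [hg]
      exact Int.gcd_pos_of_ne_zero_right p₀ (by simpa [hq₀] using ha)
    obtain ⟨p, hp⟩ : (g : ℤ) ∣ p₀ := Int.gcd_dvd_left p₀ q₀
    obtain ⟨q, hq⟩ : (g : ℤ) ∣ q₀ := Int.gcd_dvd_right p₀ q₀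
    have hgz : (g : ℤ) ≠ 0 := by exact_mod_cast hgpos.ne'
    have hcop : Int.gcd p q = 1 := by
      have h1 : p = p₀ / g := by rw [hp]; exact (Int.mul_ediv_cancel_left p hgz).symm
      have h2 : q = q₀ / g := by rw [hq]; exact (Int.mul_ediv_cancel_left q hgz).symm
      rw [h1, h2, hg]
      exact Int.gcd_div_gcd_div_gcd hgpos
    have hGp : a' * p * p + d' * p * q + d' * q * p + c' * q * q = 0 := by
      have h2 : (g : ℤ) * g * (a' * p * p + d' * p * q + d' * q * p + c' * q * q) = 0 := by
        rw [hp, hq] at hG0; linear_combination hG0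
      rcases mul_eq_zero.mp h2 with h3 | h3
      · exact absurd h3 (mul_ne_zero hgz hgz)
      · exact h3
    obtain ⟨s, r, hbez⟩ : ∃ s r : ℤ, p * s - q * r = 1 := by
      refine ⟨Int.gcdA p q, -Int.gcdB p q, ?_⟩
      have := Int.gcd_eq_gcd_ab p q
      rw [hcop] at this
      push_cast at this
      linarith [this]
    set m : ℤ := a' * p * r + d' * p * s + d' * q * r + c' * q * s with hm
    have hmsq : m * m = 1 := by
      have id1 : m * m =
          (a' * p * p + d' * p * q + d' * q * p + c' * q * q) *
            (a' * r * r + d' * r * s + d' * s * r + c' * s * s)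
          + (p * s - q * r) * (p * s - q * r) * (d' * d' - a' * c') := by
        rw [hm]; ring
      rw [hGp, hbez] at id1
      rw [id1]; linarith
    have hm1 : m = 1 ∨ m = -1 := by
      have : (m - 1) * (m + 1) = 0 := by linear_combination hmsq
      rcases mul_eq_zero.mp this with h1 | h1
      · left; linarith
      · right; linarith
    rcases hm1 with hm1 | hm1
    · exact ⟨p, q, r, s, Or.inl hbez, hGp, by rw [← hm]; exact hm1⟩
    · refine ⟨p, q, -r, -s, Or.inr (by linarith), hGp, by linear_combination -hm1⟩

/-- An even indefinite lattice of rank 2, signature `(1,1)` and determinant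
`-4` is isometric either to `U(2)` (Gram matrix `[[0,2],[2,0]]`) or to
`⟨2⟩ ⊕ ⟨-2⟩` (Gram matrix `diag(2,-2)`); moreover these two lattices are not
isometric to each other. -/
theorem even_rank_two_det_neg_four_classification
    (b : (Fin 2 → ℤ) →ₗ[ℤ] (Fin 2 → ℤ) →ₗ[ℤ] ℤ)
    (hsymm : ∀ x y, b x y = b y x) (heven : ∀ x, Even (b x x))
    (hindef : (∃ x, 0 < b x x) ∧ (∃ y, b y y < 0))
    (hdet : b (Pi.single 0 1) (Pi.single 0 1) * b (Pi.single 1 1) (Pi.single 1 1)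
      - b (Pi.single 0 1) (Pi.single 1 1) * b (Pi.single 1 1) (Pi.single 0 1)
        = -4) :
    ((∃ B : Module.Basis (Fin 2) ℤ (Fin 2 → ℤ),
        b (B 0) (B 0) = 0 ∧ b (B 1) (B 1) = 0 ∧ b (B 0) (B 1) = 2) ∨
      (∃ B : Module.Basis (Fin 2) ℤ (Fin 2 → ℤ),
        b (B 0) (B 0) = 2 ∧ b (B 1) (B 1) = -2 ∧ b (B 0) (B 1) = 0)) ∧
    ¬ ∃ e : (Fin 2 → ℤ) ≃ₗ[ℤ] (Fin 2 → ℤ), ∀ x y : Fin 2 → ℤ,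
        2 * (e x 0 * e y 1 + e x 1 * e y 0)
          = 2 * (x 0 * y 0) - 2 * (x 1 * y 1) := by
  constructor
  · -- classification part
    set e0 : Fin 2 → ℤ := Pi.single 0 1 with he0
    set e1 : Fin 2 → ℤ := Pi.single 1 1 with he1
    set a : ℤ := b e0 e0 with ha
    set c : ℤ := b e1 e1 with hc
    set d : ℤ := b e0 e1 with hd
    have hd' : b e1 e0 = d := (hsymm e1 e0).trans hd.symm
    have hdet2 : a * c - d * d = -4 := by rw [hd'] at hdet; exact hdet
    have hxdec : ∀ x : Fin 2 → ℤ, x = x 0 • e0 + x 1 • e1 := by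
      intro x; funext i; fin_cases i <;> simp [he0, he1]
    have hexp : ∀ x y : Fin 2 → ℤ,
        b x y = x 0 * y 0 * a + x 0 * y 1 * d + x 1 * y 0 * d + x 1 * y 1 * c := by
      intro x y
      conv_lhs => rw [hxdec x, hxdec y]
      simp only [map_add, map_smul, LinearMap.add_apply, LinearMap.smul_apply,
        smul_eq_mul, ← ha, ← hc, ← hd, hd']
      ring
    obtain ⟨a', ha'⟩ := heven e0
    obtain ⟨c', hc'⟩ := heven e1
    rw [← ha] at ha'
    rw [← hc] at hc'
    have hdeven : Even d := by
      rcases Int.even_or_odd d with h | h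
      · exact h
      · exfalso
        obtain ⟨k, hk⟩ := h
        have h3 : 4 * (a' * c' + 1 - k * k - k) = 1 := by
          rw [ha', hc', hk] at hdet2
          linear_combination hdet2
        set K := a' * c' + 1 - k * k - k with hK
        omega
    obtain ⟨dd, hdd⟩ := hdeven
    have hexp2 : ∀ x y : Fin 2 → ℤ,
        b x y = 2 * (a' * (x 0) * (y 0) + dd * (x 0) * (y 1)
          + dd * (x 1) * (y 0) + c' * (x 1) * (y 1)) := by
      intro x y
      rw [hexp, ha', hc', hdd]; ring
    have hkey : a' * c' - dd * dd = -1 := by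
      rw [ha', hc', hdd] at hdet2
      linarith [hdet2]
    obtain ⟨p, q, r, s, hdet1, hGvv, hGvw⟩ := arith_classify a' dd c' hkey
    rcases Int.even_or_odd (a' * r * r + dd * r * s + dd * s * r + c' * s * s) with hpar | hpar
    · -- even case : U(2)
      obtain ⟨t, ht⟩ := hpar
      left
      obtain ⟨B, hB0, hB1⟩ := exists_basis_pair ![p, q] ![r - t * p, s - t * q] (by
        rcases hdet1 with h1 | h1
        · left; simp only [Matrix.cons_val_zero, Matrix.cons_val_one, Matrix.head_cons]
          linear_combination h1
        · right; simp only [Matrix.cons_val_zero, Matrix.cons_val_one, Matrix.head_cons]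
          linear_combination h1)
      refine ⟨B, ?_, ?_, ?_⟩ <;>
        simp only [hB0, hB1, hexp2, Matrix.cons_val_zero, Matrix.cons_val_one,
          Matrix.head_cons]
      · linear_combination 2 * hGvv
      · linear_combination 2 * ht - 4 * t * hGvw + 2 * t * t * hGvv
      · linear_combination 2 * hGvw - 2 * t * hGvv
    · -- odd case : diag(2,-2)
      obtain ⟨t, ht⟩ := hpar
      right
      obtain ⟨B, hB0, hB1⟩ := exists_basis_pair ![r - t * p, s - t * q]
        ![r - t * p - p, s - t * q - q] (by
        rcases hdet1 with h1 | h1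
        · left; simp only [Matrix.cons_val_zero, Matrix.cons_val_one, Matrix.head_cons]
          linear_combination h1
        · right; simp only [Matrix.cons_val_zero, Matrix.cons_val_one, Matrix.head_cons]
          linear_combination h1)
      refine ⟨B, ?_, ?_, ?_⟩ <;>
        simp only [hB0, hB1, hexp2, Matrix.cons_val_zero, Matrix.cons_val_one,
          Matrix.head_cons]
      · linear_combination 2 * ht - 4 * t * hGvw + 2 * t * t * hGvv
      · linear_combination 2 * ht - (4 * t + 4) * hGvw + (2 * (t + 1) * (t + 1)) * hGvv
      · linear_combination 2 * ht - 2 * (2 * t + 1) * hGvw + 2 * t * (t + 1) * hGvv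
  · -- the two lattices are not isometric
    rintro ⟨e, he⟩
    have h1 := he (Pi.single 0 1) (Pi.single 0 1)
    simp only [Pi.single_eq_same, Pi.single_eq_of_ne (by decide : (1 : Fin 2) ≠ 0)] at h1
    set u := e (Pi.single 0 1) 0
    set v := e (Pi.single 0 1) 1
    have : 2 * (u * v) = 1 := by linarith
    omega
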